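/- Egalitarian PoC lower bound for paths with many vertices: for a path on m ≥ 2n−1 vertices and n agents, the egalitarian price of connectivity is at least n. Witness instance: for i ∈ {1,...,n−1}, agent i values vertex 2i at 1; agent n values each vertex 2i−1 (i ∈ {1,...,n}) at 1/n. The unconstrained optimal egalitarian welfare is 1 while every connected allocation has egalitarian welfare at most 1/n. -/

import Mathlib

def ConnB {V : Type*} (G : SimpleGraph V) (s : Finset V) : Prop :=
  s = ∅ ∨ (G.induce (s : Set V)).Connected

def IsAlloc {V : Type*} [Fintype V] [DecidableEq V] {n : ℕ} (A : Fin n → Finset V) : Prop :=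
  (∀ i j : Fin n, i ≠ j → Disjoint (A i) (A j)) ∧ Finset.univ.biUnion A = Finset.univ

/-- The path on `m` vertices `0 — 1 — ⋯ — (m-1)`. -/
def pathGraph (m : ℕ) : SimpleGraph (Fin m) where
  Adj x y := x.val + 1 = y.val ∨ y.val + 1 = x.val
  symm := ⟨by rintro x y (h | h); exacts [Or.inr h, Or.inl h]⟩
  loopless := ⟨by rintro x (h | h) <;> omega⟩

lemma path_walk_mem {m : ℕ} {x y : Fin m} (w : (pathGraph m).Walk x y) (z : Fin m)
    (h1 : x.val ≤ z.val) (h2 : z.val ≤ y.val) : z ∈ w.support := by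
  induction w with
  | nil =>
    have : z = _ := Fin.ext (le_antisymm h2 h1)
    simp [this]
  | @cons a b c h p ih =>
    by_cases hz : z = a
    · simp [hz]
    · have hlt : a.val < z.val := lt_of_le_of_ne h1 (by
        intro hh; exact hz (Fin.ext hh.symm))
      have hb : b.val ≤ z.val := by rcases h with h | h <;> omega
      simp [SimpleGraph.Walk.support_cons]
      exact Or.inr (ih hb h2)

lemma connB_interval {m : ℕ} {s : Finset (Fin m)} (hs : ConnB (pathGraph m) s)
    {x y : Fin m} (z : Fin m) (hx : x ∈ s) (hy : y ∈ s)
    (h1 : x.val ≤ z.val) (h2 : z.val ≤ y.val) : z ∈ s := by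
  rcases hs with rfl | hc
  · exact absurd hx (by simp)
  · have hr := hc.preconnected ⟨x, by simpa using hx⟩ ⟨y, by simpa using hy⟩
    obtain ⟨w'⟩ := hr
    let f : (pathGraph m).induce (s : Set (Fin m)) →g pathGraph m :=
      { toFun := Subtype.val, map_rel' := fun h => h }
    have hz := path_walk_mem (w'.map f) z h1 h2
    rw [SimpleGraph.Walk.support_map, List.mem_map] at hz
    obtain ⟨a, _, ha⟩ := hz
    have h2 : (a : Fin m) ∈ s := by simpa using a.2
    rwa [show (a : Fin m) = z from ha] at h2

theorem egal_poc_path_lower (m n : ℕ) (hn : 2 ≤ n) (hm : 2 * n - 1 ≤ m)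
    (u : Fin n → Fin m → ℝ)
    (hu : ∀ i : Fin n, i.val < n - 1 → ∀ v : Fin m,
      u i v = if v.val = 2 * i.val + 1 then (1 : ℝ) else 0)
    (hun : ∀ i : Fin n, i.val = n - 1 → ∀ v : Fin m,
      u i v = if v.val % 2 = 0 ∧ v.val < 2 * n - 1 then ((n : ℝ))⁻¹ else 0) :
    (∃ A : Fin n → Finset (Fin m), IsAlloc A ∧ ∀ i, ∑ v ∈ A i, u i v = 1) ∧
    (∀ B : Fin n → Finset (Fin m), IsAlloc B → (∀ i, ConnB (pathGraph m) (B i)) →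
      ∃ i, ∑ v ∈ B i, u i v ≤ ((n : ℝ))⁻¹) := by
  have hn0 : 0 < n := by omega
  constructor
  · -- Part 1: the disconnected allocation
    set f : Fin m → Fin n := fun v =>
      if h : v.val % 2 = 1 ∧ v.val < 2 * n - 1 then ⟨v.val / 2, by omega⟩
      else ⟨n - 1, by omega⟩ with hf
    refine ⟨fun i => Finset.univ.filter (fun v => f v = i), ⟨?_, ?_⟩, ?_⟩
    · intro i j hij
      simp only [Finset.disjoint_filter]
      intro v _ hvi hvj
      exact hij (hvi ▸ hvj ▸ rfl)
    · refine Finset.eq_univ_iff_forall.mpr fun v => Finset.mem_biUnion.mpr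
        ⟨f v, Finset.mem_univ _, Finset.mem_filter.mpr ⟨Finset.mem_univ _, rfl⟩⟩
    · intro i
      by_cases hi : i.val < n - 1
      · rw [Finset.sum_congr rfl (fun v _ => hu i hi v)]
        have h2i : 2 * i.val + 1 < m := by omega
        have heq : ∀ v : Fin m, (v.val = 2 * i.val + 1) ↔ v = ⟨2 * i.val + 1, h2i⟩ := by
          intro v; constructor
          · intro h; exact Fin.ext h
          · intro h; rw [h]
        rw [Finset.sum_congr rfl (fun v _ => by rw [if_congr (heq v) rfl rfl])]
        rw [Finset.sum_ite_eq' _ (⟨2 * i.val + 1, h2i⟩ : Fin m) (fun _ => (1:ℝ))]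
        rw [if_pos]
        simp only [Finset.mem_filter, Finset.mem_univ, true_and, hf]
        rw [dif_pos (by constructor <;> omega)]
        exact Fin.ext (by simp; omega)
      · have hi' : i.val = n - 1 := by omega
        rw [Finset.sum_congr rfl (fun v _ => hun i hi' v)]
        rw [← Finset.sum_filter]
        have hcard : ((Finset.univ.filter (fun v => f v = i)).filter
            (fun v : Fin m => v.val % 2 = 0 ∧ v.val < 2 * n - 1)).card = n := by
          rw [Finset.filter_filter]
          have hset : (Finset.univ.filter (fun v : Fin m => f v = i ∧
              v.val % 2 = 0 ∧ v.val < 2 * n - 1)) =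
              (Finset.univ : Finset (Fin n)).image
                (fun j : Fin n => (⟨2 * j.val, by have := j.isLt; omega⟩ : Fin m)) := by
            ext v
            rw [Finset.mem_filter, Finset.mem_image]
            constructor
            · rintro ⟨-, hfv, hv2, hvlt⟩
              exact ⟨⟨v.val / 2, by omega⟩, Finset.mem_univ _,
                Fin.ext (show 2 * (v.val / 2) = v.val by omega)⟩
            · rintro ⟨j, -, rfl⟩
              have hj := j.isLt
              refine ⟨Finset.mem_univ _, ?_, show 2 * j.val % 2 = 0 by omega,
                show 2 * j.val < 2 * n - 1 by omega⟩
              simp only [hf]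
              rw [dif_neg (show ¬(2 * j.val % 2 = 1 ∧ 2 * j.val < 2 * n - 1) by omega)]
              exact Fin.ext (show n - 1 = i.val from hi'.symm)
          rw [hset, Finset.card_image_of_injective _ (fun a b hab => by
            have : 2 * a.val = 2 * b.val := congrArg Fin.val hab
            exact Fin.ext (by omega))]
          simp
        rw [Finset.sum_const, hcard, nsmul_eq_mul]
        field_simp
  · -- Part 2: every connected allocation
    intro B hB hconn
    set i_n : Fin n := ⟨n - 1, by omega⟩ with hi_n
    have hinval : i_n.val = n - 1 := rfl
    set S := (B i_n).filter (fun v : Fin m => v.val % 2 = 0 ∧ v.val < 2 * n - 1) with hS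
    by_cases hcard : S.card ≤ 1
    · refine ⟨i_n, ?_⟩
      rw [Finset.sum_congr rfl (fun v _ => hun i_n rfl v)]
      rw [← Finset.sum_filter, ← hS, Finset.sum_const, nsmul_eq_mul]
      calc (S.card : ℝ) * (n:ℝ)⁻¹ ≤ 1 * (n:ℝ)⁻¹ := by
            apply mul_le_mul_of_nonneg_right _ (by positivity)
            exact_mod_cast hcard
        _ = (n:ℝ)⁻¹ := one_mul _
    · push_neg at hcard
      obtain ⟨x, hxS, y, hyS, hxy⟩ := Finset.one_lt_card.mp hcard
      wlog hlt : x.val < y.val generalizing x y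
      · exact this y hyS x hxS hxy.symm (by
          rcases lt_or_eq_of_le (not_lt.mp hlt) with h | h
          · exact h
          · exact absurd (Fin.ext h) hxy.symm)
      rw [hS, Finset.mem_filter] at hxS hyS
      obtain ⟨hxB, hx2, hxlt⟩ := hxS
      obtain ⟨hyB, hy2, hylt⟩ := hyS
      have hz : x.val + 1 < m := by omega
      obtain ⟨z, hzval⟩ : ∃ z : Fin m, z.val = x.val + 1 := ⟨⟨x.val + 1, hz⟩, rfl⟩
      have hzB : z ∈ B i_n := connB_interval (hconn i_n) z hxB hyB
        (by omega) (by omega)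
      obtain ⟨a, haval⟩ : ∃ a : Fin n, a.val = x.val / 2 := ⟨⟨x.val / 2, by omega⟩, rfl⟩
      have han : a.val < n - 1 := by omega
      refine ⟨a, ?_⟩
      rw [Finset.sum_congr rfl (fun v _ => hu a han v)]
      have hz0 : ∀ v ∈ B a, (if v.val = 2 * a.val + 1 then (1:ℝ) else 0) = 0 := by
        intro v hv
        rw [if_neg]
        intro hveq
        have hvz : v = z := Fin.ext (by omega)
        have hdisj := hB.1 a i_n (by
          intro h
          have h2 : a.val = i_n.val := congrArg Fin.val h
          omega)
        exact Finset.disjoint_left.mp hdisj hv (hvz ▸ hzB)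
      rw [Finset.sum_congr rfl hz0, Finset.sum_const, smul_zero]
      positivity
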